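/- Let H be a complex Hilbert space, 𝔄 a C*-algebra acting on H, σ : 𝔄 → B(H) a continuous linear map, and d : 𝔄 → B(H) a *-σ-derivation. Then there exist a continuous *-homomorphism Σ : 𝔄 → B(H) (linear, multiplicative, and satisfying Σ(A*) = Σ(A)*) and a *-Σ-derivation D : 𝔄 → B(H) such that D is continuous if and only if d is continuous. -/

import Mathlib

set_option maxHeartbeats 1000000


/-- **Proposition 3.6.** Let `𝔄` be a C*-algebra acting on a Hilbert space `H`,
`σ : 𝔄 → B(H)` a continuous linear map and `d : 𝔄 → B(H)` a `*`-`σ`-derivation.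
Then there exist a continuous `*`-homomorphism `Σ : 𝔄 → B(H)` and a
`*`-`Σ`-derivation `D : 𝔄 → B(H)` such that `D` is continuous iff `d` is. -/
theorem stmt_12 {H : Type*} [NormedAddCommGroup H] [InnerProductSpace ℂ H]
    [CompleteSpace H]
    (𝔄 : NonUnitalStarSubalgebra ℂ (H →L[ℂ] H))
    (hcl : IsClosed (𝔄 : Set (H →L[ℂ] H)))
    (σ d : 𝔄 →ₗ[ℂ] (H →L[ℂ] H))
    (hσ_cont : Continuous σ)
    (hd : ∀ A B : 𝔄, d (A * B) = d A * σ B + σ A * d B)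
    (hd_star : ∀ A : 𝔄, d (star A) = star (d A)) :
    ∃ Sig D : 𝔄 →ₗ[ℂ] (H →L[ℂ] H),
      Continuous Sig ∧
      (∀ A B : 𝔄, Sig (A * B) = Sig A * Sig B) ∧
      (∀ A : 𝔄, Sig (star A) = star (Sig A)) ∧
      (∀ A B : 𝔄, D (A * B) = D A * Sig B + Sig A * D B) ∧
      (∀ A : 𝔄, D (star A) = star (D A)) ∧
      (Continuous D ↔ Continuous d) := by
  classical
  haveI : CompleteSpace 𝔄 := hcl.completeSpace_coe
  -- the symmetrization of `σ`
  let τ : 𝔄 →ₗ[ℂ] (H →L[ℂ] H) :=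
    { toFun := fun A => (2⁻¹ : ℂ) • (σ A + star (σ (star A)))
      map_add' := by
        intro A B
        simp only [star_add, map_add, smul_add]
        abel
      map_smul' := by
        intro c A
        simp only [star_smul, map_smul, star_smul, smul_add, RingHom.id_apply,
          smul_smul, star_star, RCLike.star_def, Complex.conj_conj]
        congr 1
        · rw [mul_comm]
        · rw [mul_comm] }
  have hτapp : ∀ A, τ A = (2⁻¹ : ℂ) • (σ A + star (σ (star A))) := fun _ => rfl
  -- star of complex half
  have hhalf : (starRingEnd ℂ) (2⁻¹ : ℂ) = 2⁻¹ := by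
    rw [map_inv₀, map_ofNat]
  have hτstar : ∀ A, τ (star A) = star (τ A) := by
    intro A
    rw [hτapp, hτapp, star_smul, star_add, star_star, star_star]
    rw [RCLike.star_def, hhalf]
    rw [add_comm]
  -- continuity of star on 𝔄
  have hstar𝔄 : Continuous (fun A : 𝔄 => star A) :=
    continuous_induced_rng.mpr (continuous_star.comp continuous_subtype_val)
  have hτcont : Continuous τ := by
    have : ⇑τ = fun A : 𝔄 => (2⁻¹ : ℂ) • (σ A + star (σ (star A))) := rfl
    rw [this]
    exact (continuous_const (y := (2⁻¹ : ℂ))).smul (hσ_cont.add (continuous_star.comp (hσ_cont.comp hstar𝔄)))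
  -- d is a τ-derivation
  have key : ∀ X Y : 𝔄,
      star (σ (star Y)) * d X + d Y * star (σ (star X))
        = d Y * σ X + σ Y * d X := by
    have G : ∀ X Y : 𝔄,
        star (σ Y) * d (star X) + d (star Y) * star (σ X)
          = d (star Y) * σ (star X) + σ (star Y) * d (star X) := by
      intro X Y
      have f1 := hd (star Y) (star X)
      have f2 : (star Y * star X : 𝔄) = star (X * Y) := (star_mul X Y).symm
      rw [f2, hd_star (X * Y), hd X Y, star_add, star_mul, star_mul,
        ← hd_star X, ← hd_star Y] at f1
      exact f1
    intro X Y
    have := G (star X) (star Y)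
    simpa only [star_star] using this
  have hder : ∀ A B : 𝔄, d (A * B) = d A * τ B + τ A * d B := by
    intro A B
    have hsum : d A * star (σ (star B)) + star (σ (star A)) * d B
        = d A * σ B + σ A * d B := by
      have k := key B A
      rw [add_comm] at k
      exact k
    have main : d A * τ B + τ A * d B = d A * σ B + σ A * d B := by
      rw [hτapp, hτapp]
      simp only [mul_smul_comm, smul_mul_assoc, mul_add, add_mul, smul_add]
      linear_combination (norm := module) (2⁻¹ : ℂ) • hsum
    rw [hd A B, main]
  -- the obstruction to multiplicativity of τ
  let Φ : 𝔄 → 𝔄 → (H →L[ℂ] H) := fun A B => τ A * τ B - τ (A * B)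
  have hΦapp : ∀ A B, Φ A B = τ A * τ B - τ (A * B) := fun _ _ => rfl
  have hΦ : ∀ A B C : 𝔄, d A * Φ B C = Φ A B * d C := by
    intro A B C
    have h1 : d (A * B * C) = (d A * τ B + τ A * d B) * τ C + τ (A * B) * d C := by
      rw [hder, hder]
    have h2 : d (A * B * C) = d A * τ (B * C) + τ A * (d B * τ C + τ B * d C) := by
      rw [mul_assoc, hder, hder]
    have key := h1.symm.trans h2
    have expand : d A * Φ B C - Φ A B * d C =
        ((d A * τ B + τ A * d B) * τ C + τ (A * B) * d C)
          - (d A * τ (B * C) + τ A * (d B * τ C + τ B * d C)) := by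
      rw [hΦapp, hΦapp]
      noncomm_ring
    rw [key, sub_self] at expand
    exact sub_eq_zero.mp expand
  have hcocycle : ∀ A B C : 𝔄,
      Φ A B * τ C = τ A * Φ B C + Φ A (B * C) - Φ (A * B) C := by
    intro A B C
    have hassoc : τ (A * B * C) = τ (A * (B * C)) := by rw [mul_assoc]
    rw [hΦapp, hΦapp, hΦapp, hΦapp, hassoc]
    noncomm_ring
  have hΦstar : ∀ A B : 𝔄, star (Φ A B) = Φ (star B) (star A) := by
    intro A B
    rw [hΦapp, hΦapp, star_sub, star_mul, ← hτstar A, ← hτstar B, ← hτstar (A * B),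
      star_mul]
  -- the subspace on which τ is multiplicative
  let 𝔑 : Submodule ℂ H :=
    { carrier := {ξ | ∀ A B : 𝔄, Φ A B ξ = 0}
      add_mem' := by
        intro x y hx hy A B
        rw [(Φ A B).map_add, hx A B, hy A B, add_zero]
      zero_mem' := fun A B => (Φ A B).map_zero
      smul_mem' := by
        intro c x hx A B
        rw [(Φ A B).map_smul, hx A B, smul_zero] }
  have h𝔑mem : ∀ x : H, x ∈ 𝔑 ↔ ∀ A B : 𝔄, Φ A B x = 0 := fun _ => Iff.rfl
  have h𝔑closed : IsClosed (𝔑 : Set H) := by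
    have : (𝔑 : Set H) = ⋂ (A : 𝔄), ⋂ (B : 𝔄), {ξ | Φ A B ξ = 0} := by
      ext x; simp [h𝔑mem, Set.mem_iInter]
    rw [this]
    exact isClosed_iInter fun A => isClosed_iInter fun B =>
      isClosed_eq (Φ A B).continuous continuous_const
  haveI : CompleteSpace 𝔑 := h𝔑closed.completeSpace_coe
  let P : H →L[ℂ] H := 𝔑.subtypeL ∘L Submodule.orthogonalProjectionOnto 𝔑
  have hPmem : ∀ ξ : H, P ξ ∈ 𝔑 := fun ξ => (Submodule.orthogonalProjectionOnto 𝔑 ξ).2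
  have hPid : ∀ ξ ∈ 𝔑, P ξ = ξ := fun ξ h => Submodule.starProjection_eq_self_iff.mpr h
  have hPsa : star P = P := (isSelfAdjoint_starProjection 𝔑)
  have hPP : P * P = P := by
    ext ξ
    exact hPid _ (hPmem ξ)
  -- commutation with P
  have hcommP : ∀ T : H →L[ℂ] H, (∀ x ∈ 𝔑, T x ∈ 𝔑) → (∀ x ∈ 𝔑, star T x ∈ 𝔑) →
      T * P = P * T := by
    intro T hT hT'
    have key : ∀ S : H →L[ℂ] H, (∀ x ∈ 𝔑, S x ∈ 𝔑) → P * (S * P) = S * P := by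
      intro S hS
      ext ξ
      exact hPid _ (hS _ (hPmem ξ))
    have h1 : P * (T * P) = T * P := key T hT
    have h2 : P * (star T * P) = star T * P := key (star T) hT'
    have h3 := congrArg star h2
    simp only [star_mul, star_star, hPsa] at h3
    -- h3 : P * T * P = P * T
    rw [← mul_assoc] at h1
    exact h1.symm.trans h3
  -- 𝔑 is invariant under τ and d
  have hNτ : ∀ C : 𝔄, ∀ x ∈ 𝔑, τ C x ∈ 𝔑 := by
    intro C x hx
    have hx' : ∀ A B : 𝔄, Φ A B x = 0 := (h𝔑mem x).mp hx
    refine (h𝔑mem _).mpr ?_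
    intro A B
    have h := congrArg (fun T : H →L[ℂ] H => T x) (hcocycle A B C)
    simp only [ContinuousLinearMap.mul_apply, ContinuousLinearMap.add_apply,
      ContinuousLinearMap.sub_apply] at h
    rw [hx' B C, hx' A (B * C), hx' (A * B) C, (τ A).map_zero] at h
    simpa using h
  have hNd : ∀ C : 𝔄, ∀ x ∈ 𝔑, d C x ∈ 𝔑 := by
    intro C x hx
    have hx' : ∀ A B : 𝔄, Φ A B x = 0 := (h𝔑mem x).mp hx
    refine (h𝔑mem _).mpr ?_
    intro A B
    have h := congrArg (fun T : H →L[ℂ] H => T x) (hΦ A B C)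
    simp only [ContinuousLinearMap.mul_apply] at h
    rw [hx' B C, (d A).map_zero] at h
    exact h.symm
  have hτP : ∀ C : 𝔄, τ C * P = P * τ C := by
    intro C
    refine hcommP _ (hNτ C) ?_
    intro x hx
    rw [← hτstar]
    exact hNτ (star C) x hx
  have hdP : ∀ C : 𝔄, d C * P = P * d C := by
    intro C
    refine hcommP _ (hNd C) ?_
    intro x hx
    rw [← hd_star]
    exact hNd (star C) x hx
  have hΦP : ∀ A B : 𝔄, Φ A B * P = 0 := by
    intro A B
    ext ξ
    exact (h𝔑mem _).mp (hPmem ξ) A B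
  -- the absorption helper
  have habs : ∀ X Y : H →L[ℂ] H, Y * P = P * Y → X * P * (Y * P) = X * Y * P := by
    intro X Y hY
    have h1 : P * (Y * P) = Y * P := by
      rw [← mul_assoc, ← hY, mul_assoc, hPP]
    rw [mul_assoc, h1, ← mul_assoc]
  -- definitions of Sig and D
  let Sig : 𝔄 →ₗ[ℂ] (H →L[ℂ] H) :=
    { toFun := fun A => τ A * P
      map_add' := by
        intro A B
        show τ (A + B) * P = τ A * P + τ B * P
        rw [map_add, add_mul]
      map_smul' := by
        intro c A
        show τ (c • A) * P = c • (τ A * P)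
        rw [map_smul, smul_mul_assoc] }
  let D : 𝔄 →ₗ[ℂ] (H →L[ℂ] H) :=
    { toFun := fun A => d A * P
      map_add' := by
        intro A B
        show d (A + B) * P = d A * P + d B * P
        rw [map_add, add_mul]
      map_smul' := by
        intro c A
        show d (c • A) * P = c • (d A * P)
        rw [map_smul, smul_mul_assoc] }
  have hSigapp : ∀ A, Sig A = τ A * P := fun _ => rfl
  have hDapp : ∀ A, D A = d A * P := fun _ => rfl
  refine ⟨Sig, D, ?_, ?_, ?_, ?_, ?_, ?_⟩
  · -- continuity of Sig
    have hco : ⇑Sig = fun A => τ A * P := rfl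
    rw [hco]
    exact hτcont.mul continuous_const
  · -- multiplicativity
    intro A B
    rw [hSigapp, hSigapp, hSigapp, habs _ _ (hτP B)]
    have h := hΦP A B
    rw [hΦapp, sub_mul, sub_eq_zero] at h
    exact h.symm
  · -- star-preservation of Sig
    intro A
    rw [hSigapp, hSigapp, star_mul, hPsa, ← hτstar, ← hτP]
  · -- derivation property
    intro A B
    rw [hDapp, hDapp, hDapp, hSigapp, hSigapp, hder, add_mul,
      habs _ _ (hτP B), habs _ _ (hdP B)]
  · -- star-preservation of D
    intro A
    rw [hDapp, hDapp, star_mul, hPsa, ← hd_star, ← hdP]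
  · -- continuity transfer
    constructor
    · intro hD
      -- closed graph theorem
      refine d.continuous_of_seq_closed_graph ?_
      intro u x y hu hy
      set S : H →L[ℂ] H := y - d x with hS
      have hv : Filter.Tendsto (fun n => u n - x) Filter.atTop (nhds 0) := by
        have := hu.sub (tendsto_const_nhds (x := x))
        simpa using this
      have hdv : Filter.Tendsto (fun n => d (u n - x)) Filter.atTop (nhds S) := by
        simp only [map_sub]
        exact hy.sub tendsto_const_nhds
      -- S * P = 0
      have hSP : S * P = 0 := by
        have t1 : Filter.Tendsto (fun n => d (u n - x) * P) Filter.atTop (nhds (S * P)) :=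
          hdv.mul tendsto_const_nhds
        have t2 : Filter.Tendsto (fun n => d (u n - x) * P) Filter.atTop (nhds 0) := by
          have : Filter.Tendsto (fun n => D (u n - x)) Filter.atTop (nhds (D 0)) :=
            (hD.tendsto 0).comp hv
          simpa only [hDapp, map_zero, zero_mul] using this
        exact tendsto_nhds_unique t1 t2
      -- S kills the ranges of the Φ's
      have hker : ∀ (B C : 𝔄) (ξ : H), S (Φ B C ξ) = 0 := by
        intro B C ξ
        have t3 : Filter.Tendsto (fun n => d (u n - x) (Φ B C ξ)) Filter.atTop
            (nhds (S (Φ B C ξ))) :=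
          ((ContinuousLinearMap.apply ℂ H (Φ B C ξ)).continuous.tendsto S).comp hdv
        have heq : ∀ n, d (u n - x) (Φ B C ξ) = Φ (u n - x) B (d C ξ) := by
          intro n
          have h := congrArg (fun T : H →L[ℂ] H => T ξ) (hΦ (u n - x) B C)
          simpa only [ContinuousLinearMap.mul_apply] using h
        have t4 : Filter.Tendsto (fun n => Φ (u n - x) B (d C ξ)) Filter.atTop (nhds 0) := by
          have hτv : Filter.Tendsto (fun n => τ (u n - x)) Filter.atTop (nhds 0) := by
            have := (hτcont.tendsto 0).comp hv
            simpa only [map_zero, Function.comp_def] using this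
          have hmul : Filter.Tendsto (fun n => (u n - x) * B) Filter.atTop (nhds 0) := by
            have := hv.mul (tendsto_const_nhds (x := B))
            simpa using this
          have hτmul : Filter.Tendsto (fun n => τ ((u n - x) * B)) Filter.atTop (nhds 0) := by
            have := (hτcont.tendsto 0).comp hmul
            simpa only [map_zero, Function.comp_def] using this
          have hΦv : Filter.Tendsto (fun n => Φ (u n - x) B) Filter.atTop (nhds 0) := by
            have := (hτv.mul (tendsto_const_nhds (x := τ B))).sub hτmul
            simpa only [hΦapp, zero_mul, sub_zero] using this
          have := ((ContinuousLinearMap.apply ℂ H (d C ξ)).continuous.tendsto 0).comp hΦv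
          simpa [Function.comp_def] using this
        rw [show (fun n => d (u n - x) (Φ B C ξ)) = fun n => Φ (u n - x) B (d C ξ) from
          funext heq] at t3
        exact tendsto_nhds_unique t3 t4
      -- S kills 𝔑ᗮ
      have horth : ∀ η ∈ 𝔑ᗮ, S η = 0 := by
        set W : Submodule ℂ H :=
          Submodule.span ℂ (⋃ (B : 𝔄) (C : 𝔄), Set.range (Φ B C)) with hW
        have hWgen : ∀ (B C : 𝔄) (ξ : H), Φ B C ξ ∈ W := by
          intro B C ξ
          refine Submodule.subset_span ?_
          exact Set.mem_iUnion.mpr ⟨B, Set.mem_iUnion.mpr ⟨C, ⟨ξ, rfl⟩⟩⟩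
        have hWker : W ≤ LinearMap.ker (S : H →ₗ[ℂ] H) := by
          rw [hW, Submodule.span_le]
          rintro w hw
          simp only [Set.mem_iUnion] at hw
          obtain ⟨B, C, ξ, rfl⟩ := hw
          exact hker B C ξ
        have hWclker : W.topologicalClosure ≤ LinearMap.ker (S : H →ₗ[ℂ] H) :=
          Submodule.topologicalClosure_minimal W hWker (ContinuousLinearMap.isClosed_ker S)
        have hWperp : Wᗮ ≤ 𝔑 := by
          intro η hη
          rw [h𝔑mem]
          intro A B
          have hinner : (inner ℂ (Φ A B η) (Φ A B η) : ℂ) = 0 := by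
            have hadj : ContinuousLinearMap.adjoint (Φ A B) = Φ (star B) (star A) := by
              rw [← ContinuousLinearMap.star_eq_adjoint]
              exact hΦstar A B
            have h1 : (inner ℂ (Φ (star B) (star A) (Φ A B η)) η : ℂ)
                = inner ℂ (Φ A B η) (Φ A B η) := by
              rw [← hadj]
              exact ContinuousLinearMap.adjoint_inner_left (Φ A B) η (Φ A B η)
            rw [← h1]
            exact (Submodule.mem_orthogonal W η).mp hη _ (hWgen (star B) (star A) (Φ A B η))
          exact inner_self_eq_zero.mp hinner
        have h1 : 𝔑ᗮ ≤ Wᗮᗮ := Submodule.orthogonal_le hWperp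
        have h2 : Wᗮᗮ = W.topologicalClosure := Submodule.orthogonal_orthogonal_eq_closure W
        intro η hη
        exact hWclker (h2 ▸ h1 hη)
      -- hence S = 0
      have hS0 : S = 0 := by
        ext ξ
        have hdecomp : S ξ = S (P ξ) + S (ξ - P ξ) := by
          rw [← map_add]
          congr 1
          abel
        have e1 : S (P ξ) = 0 := by
          have := congrArg (fun T : H →L[ℂ] H => T ξ) hSP
          simpa only [ContinuousLinearMap.mul_apply, ContinuousLinearMap.zero_apply] using this
        have e2 : S (ξ - P ξ) = 0 := by
          refine horth _ ?_
          exact Submodule.sub_starProjection_mem_orthogonal (K := 𝔑) ξ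
        simp [hdecomp, e1, e2]
      have := sub_eq_zero.mp hS0
      exact this
    · intro hd_cont
      have hco : ⇑D = fun A => d A * P := rfl
      rw [hco]
      exact hd_cont.mul continuous_const
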